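/- (Weyl's inequality.) Let A, A' be N×N Hermitian complex matrices with eigenvalues λ_0 ≤ λ_1 ≤ … ≤ λ_{N−1} and λ'_0 ≤ λ'_1 ≤ … ≤ λ'_{N−1} listed in nondecreasing order (with multiplicity). Then for every j ∈ {0,…,N−1}, |λ_j − λ'_j| ≤ ‖A − A'‖. -/

import Mathlib

open Matrix Finset

/-- The spectral norm (largest singular value) of a complex matrix, i.e. the operator norm
induced by the Euclidean norm. -/
noncomputable def specNorm {N : ℕ} (M : Matrix (Fin N) (Fin N) ℂ) : ℝ :=
  ‖Matrix.toEuclideanCLM (𝕜 := ℂ) M‖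


section aux
variable {N : ℕ}

local notation "E" => EuclideanSpace ℂ (Fin N)

noncomputable def oV (v : Fin N → (Fin N → ℂ)) (k : Fin N) : EuclideanSpace ℂ (Fin N) :=
  (WithLp.equiv 2 (Fin N → ℂ)).symm (v k)

lemma oV_orthonormal (v : Fin N → (Fin N → ℂ))
    (hv : ∀ j k, star (v j) ⬝ᵥ v k = if j = k then 1 else 0) :
    Orthonormal ℂ (oV (N := N) v) := by
  rw [orthonormal_iff_ite]
  intro i j
  rw [oV, oV, WithLp.equiv_symm_apply, EuclideanSpace.inner_toLp_toLp, dotProduct_comm, hv]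

lemma weyl_key (A : Matrix (Fin N) (Fin N) ℂ) (lam : Fin N → ℝ)
    (v : Fin N → (Fin N → ℂ))
    (ho : Orthonormal ℂ (oV (N := N) v))
    (heig : ∀ k, A.mulVec (v k) = (lam k : ℂ) • v k)
    (s : Finset (Fin N)) (c : ℝ) (hc : ∀ k ∈ s, c ≤ lam k)
    (y : EuclideanSpace ℂ (Fin N))
    (hy : y ∈ Submodule.span ℂ (oV (N := N) v '' ↑s))
    (hy1 : ‖y‖ = 1) :
    c ≤ Complex.re (inner ℂ y (Matrix.toEuclideanCLM (𝕜 := ℂ) A y)) := by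
  rw [Finsupp.mem_span_image_iff_linearCombination] at hy
  obtain ⟨l, hls, hl⟩ := hy
  have hzero : ∀ k ∉ s, l k = 0 := by
    intro k hk
    exact (Finsupp.mem_supported' ℂ l).1 hls k (by simpa using hk)
  have hy_sum : y = ∑ k : Fin N, l k • oV v k := by
    rw [← hl, Finsupp.linearCombination_apply, Finsupp.sum_fintype]
    intro k; exact zero_smul _ _
  have hAo : ∀ k, Matrix.toEuclideanCLM (𝕜 := ℂ) A (oV v k) = (lam k : ℂ) • oV v k := by
    intro k
    rw [oV, WithLp.equiv_symm_apply, Matrix.toEuclideanCLM_toLp, ← Matrix.toLin'_apply]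
    have : Matrix.toLin' A (v k) = (lam k : ℂ) • v k := by
      rw [Matrix.toLin'_apply]; exact heig k
    rw [this]
    rfl
  have hAy : Matrix.toEuclideanCLM (𝕜 := ℂ) A y
      = ∑ k : Fin N, (l k * (lam k : ℂ)) • oV v k := by
    rw [hy_sum, map_sum]
    refine Finset.sum_congr rfl fun k _ => ?_
    rw [ContinuousLinearMap.map_smul, hAo, smul_smul, mul_comm]
  have h1 : (inner ℂ y y : ℂ) = ∑ k : Fin N, (starRingEnd ℂ) (l k) * l k := by
    rw [hy_sum]; exact ho.inner_sum l l univ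
  have h2 : (inner ℂ y (Matrix.toEuclideanCLM (𝕜 := ℂ) A y) : ℂ)
      = ∑ k : Fin N, (starRingEnd ℂ) (l k) * (l k * (lam k : ℂ)) := by
    rw [hAy]
    nth_rewrite 1 [hy_sum]
    exact ho.inner_sum l (fun k => l k * (lam k : ℂ)) univ
  have hterm : ∀ k, (starRingEnd ℂ) (l k) * (l k * (lam k : ℂ))
      = ((Complex.normSq (l k) * lam k : ℝ) : ℂ) := by
    intro k
    rw [← mul_assoc]
    rw [show (starRingEnd ℂ) (l k) * l k = ((Complex.normSq (l k) : ℝ) : ℂ) by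
      rw [mul_comm]; exact Complex.mul_conj (l k)]
    push_cast; ring
  have hsum1 : ∑ k : Fin N, Complex.normSq (l k) = 1 := by
    have h := congrArg Complex.re h1
    have hn : Complex.re (inner ℂ y y) = ‖y‖ ^ 2 := by
      rw [← RCLike.re_to_complex]; exact inner_self_eq_norm_sq y
    rw [hn, hy1, Complex.re_sum] at h
    norm_num at h
    simpa [Complex.normSq_apply] using h.symm
  have h3 : Complex.re (inner ℂ y (Matrix.toEuclideanCLM (𝕜 := ℂ) A y))
      = ∑ k : Fin N, Complex.normSq (l k) * lam k := by
    rw [h2, Complex.re_sum]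
    apply Finset.sum_congr rfl
    intro k _
    rw [hterm k]; simp
  rw [h3]
  calc c = ∑ k : Fin N, Complex.normSq (l k) * c := by
            rw [← Finset.sum_mul, hsum1, one_mul]
    _ ≤ ∑ k : Fin N, Complex.normSq (l k) * lam k := by
        apply Finset.sum_le_sum
        intro k _
        by_cases hk : k ∈ s
        · exact mul_le_mul_of_nonneg_left (hc k hk) (Complex.normSq_nonneg _)
        · rw [hzero k hk]; simp
end aux

lemma finrank_span_oV {N : ℕ} (v : Fin N → (Fin N → ℂ))
    (ho : Orthonormal ℂ (oV (N := N) v)) (s : Finset (Fin N)) :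
    Module.finrank ℂ (Submodule.span ℂ (oV (N := N) v '' ↑s)) = s.card := by
  have hli : LinearIndependent ℂ (fun k : ↥(s : Set (Fin N)) => oV (N := N) v k) :=
    (ho.comp Subtype.val Subtype.val_injective).linearIndependent
  have hrange : Set.range (fun k : ↥(s : Set (Fin N)) => oV (N := N) v k)
      = oV (N := N) v '' ↑s := by
    rw [show (fun k : ↥(s : Set (Fin N)) => oV (N := N) v k)
        = oV (N := N) v ∘ Subtype.val from rfl, Set.range_comp, Subtype.range_coe]
  rw [← hrange, finrank_span_eq_card hli]
  simp

lemma specNorm_comm {N : ℕ} (A A' : Matrix (Fin N) (Fin N) ℂ) :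
    specNorm (A - A') = specNorm (A' - A) := by
  unfold specNorm
  rw [← norm_neg, ← map_neg, neg_sub]

lemma weyl_one_sided {N : ℕ} (A A' : Matrix (Fin N) (Fin N) ℂ)
    (lam lam' : Fin N → ℝ) (hmono : Monotone lam) (hmono' : Monotone lam')
    (v v' : Fin N → (Fin N → ℂ))
    (hv : ∀ j k, star (v j) ⬝ᵥ v k = if j = k then 1 else 0)
    (hv' : ∀ j k, star (v' j) ⬝ᵥ v' k = if j = k then 1 else 0)
    (heig : ∀ j, A.mulVec (v j) = (lam j : ℂ) • v j)
    (heig' : ∀ j, A'.mulVec (v' j) = (lam' j : ℂ) • v' j)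
    (j : Fin N) :
    lam j - lam' j ≤ specNorm (A - A') := by
  have ho := oV_orthonormal v hv
  have ho' := oV_orthonormal v' hv'
  set S := Submodule.span ℂ (oV (N := N) v '' ↑(Finset.Ici j)) with hSdef
  set T := Submodule.span ℂ (oV (N := N) v' '' ↑(Finset.Iic j)) with hTdef
  have hS : Module.finrank ℂ S = N - j := by
    rw [hSdef, finrank_span_oV v ho, Fin.card_Ici]
  have hT : Module.finrank ℂ T = j + 1 := by
    rw [hTdef, finrank_span_oV v' ho', Fin.card_Iic]
  have hd := Submodule.finrank_sup_add_finrank_inf_eq S T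
  have hle : Module.finrank ℂ ↥(S ⊔ T) ≤ N := by
    have h := Submodule.finrank_le (S ⊔ T)
    simpa using h
  have hjN : (j : ℕ) < N := j.isLt
  have hpos : 0 < Module.finrank ℂ ↥(S ⊓ T) := by omega
  have hne : S ⊓ T ≠ ⊥ := by
    intro h
    rw [h, finrank_bot] at hpos
    exact lt_irrefl 0 hpos
  obtain ⟨x, hx, hx0⟩ := (S ⊓ T).ne_bot_iff.mp hne
  have hxS : x ∈ S := (Submodule.mem_inf.mp hx).1
  have hxT : x ∈ T := (Submodule.mem_inf.mp hx).2
  set y : EuclideanSpace ℂ (Fin N) := ((‖x‖⁻¹ : ℝ) : ℂ) • x with hydef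
  have hy1 : ‖y‖ = 1 := by
    rw [hydef, norm_smul]
    simp [norm_ne_zero_iff.mpr hx0, inv_mul_cancel₀]
  have hyS : y ∈ S := S.smul_mem _ hxS
  have hyT : y ∈ T := T.smul_mem _ hxT
  have hlow : lam j ≤ Complex.re (inner ℂ y (Matrix.toEuclideanCLM (𝕜 := ℂ) A y)) :=
    weyl_key A lam v ho heig (Finset.Ici j) (lam j)
      (fun k hk => hmono (Finset.mem_Ici.mp hk)) y hyS hy1
  have heig'neg : ∀ k, (-A').mulVec (v' k) = (((fun k => -lam' k) k : ℝ) : ℂ) • v' k := by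
    intro k
    rw [Matrix.neg_mulVec, heig' k]
    push_cast
    rw [neg_smul]
  have hupneg : -(lam' j) ≤
      Complex.re (inner ℂ y (Matrix.toEuclideanCLM (𝕜 := ℂ) (-A') y)) :=
    weyl_key (-A') (fun k => -lam' k) v' ho' heig'neg (Finset.Iic j) (-(lam' j))
      (fun k hk => neg_le_neg (hmono' (Finset.mem_Iic.mp hk))) y hyT hy1
  have hup : Complex.re (inner ℂ y (Matrix.toEuclideanCLM (𝕜 := ℂ) A' y)) ≤ lam' j := by
    have hneg : (inner ℂ y (Matrix.toEuclideanCLM (𝕜 := ℂ) (-A') y) : ℂ)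
        = -(inner ℂ y (Matrix.toEuclideanCLM (𝕜 := ℂ) A' y) : ℂ) := by
      rw [map_neg]
      simp [inner_neg_right]
    rw [hneg, Complex.neg_re] at hupneg
    linarith
  have hsub : (inner ℂ y (Matrix.toEuclideanCLM (𝕜 := ℂ) (A - A') y) : ℂ)
      = (inner ℂ y (Matrix.toEuclideanCLM (𝕜 := ℂ) A y) : ℂ)
        - (inner ℂ y (Matrix.toEuclideanCLM (𝕜 := ℂ) A' y) : ℂ) := by
    rw [map_sub]
    simp [inner_sub_right]
  have hbound : Complex.re (inner ℂ y (Matrix.toEuclideanCLM (𝕜 := ℂ) (A - A') y))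
      ≤ specNorm (A - A') := by
    calc Complex.re (inner ℂ y (Matrix.toEuclideanCLM (𝕜 := ℂ) (A - A') y))
        ≤ ‖(inner ℂ y (Matrix.toEuclideanCLM (𝕜 := ℂ) (A - A') y) : ℂ)‖ :=
          Complex.re_le_norm _
      _ ≤ ‖y‖ * ‖Matrix.toEuclideanCLM (𝕜 := ℂ) (A - A') y‖ := norm_inner_le_norm _ _
      _ ≤ ‖y‖ * (‖Matrix.toEuclideanCLM (𝕜 := ℂ) (A - A')‖ * ‖y‖) := by
          apply mul_le_mul_of_nonneg_left (ContinuousLinearMap.le_opNorm _ _) (norm_nonneg _)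
      _ = specNorm (A - A') := by rw [hy1, specNorm]; ring
  have := congrArg Complex.re hsub
  rw [Complex.sub_re] at this
  linarith


/-- **Weyl's inequality.**  If `A, A'` are Hermitian `N × N` matrices whose eigenvalues,
listed in nondecreasing order with multiplicity (as witnessed by monotone listings together
with orthonormal eigenbases), are `lam` and `lam'`, then `|lam j - lam' j| ≤ ‖A - A'‖` for
every `j`. -/
theorem weyl_inequality {N : ℕ} (A A' : Matrix (Fin N) (Fin N) ℂ)
    (hA : A.IsHermitian) (hA' : A'.IsHermitian)
    (lam lam' : Fin N → ℝ) (hmono : Monotone lam) (hmono' : Monotone lam')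
    (v v' : Fin N → (Fin N → ℂ))
    (hv : ∀ j k, star (v j) ⬝ᵥ v k = if j = k then 1 else 0)
    (hv' : ∀ j k, star (v' j) ⬝ᵥ v' k = if j = k then 1 else 0)
    (heig : ∀ j, A.mulVec (v j) = (lam j : ℂ) • v j)
    (heig' : ∀ j, A'.mulVec (v' j) = (lam' j : ℂ) • v' j)
    (j : Fin N) :
    |lam j - lam' j| ≤ specNorm (A - A') := by
  rw [abs_sub_le_iff]
  constructor
  · exact weyl_one_sided A A' lam lam' hmono hmono' v v' hv hv' heig heig' j
  · have h := weyl_one_sided A' A lam' lam hmono' hmono v' v hv' hv heig' heig j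
    rwa [← specNorm_comm] at h
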